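/- Let A be a closed densely defined operator on a Hilbert space 𝓗 and C a bounded operator on 𝓗. Then the following are equivalent: (a) range(C) ⊂ D(A) and AC is bounded; (b) sup over unit vectors φ ∈ D(A*) of |C* A* φ| is finite. Moreover, when these hold, ‖AC‖ equals that supremum. -/

import Mathlib

open MeasureTheory InnerProductSpace ContinuousLinearMap

local notation "⟪" x ", " y "⟫" => @inner ℂ _ _ x y

private lemma stmt4_fwd {𝓗 : Type*} [NormedAddCommGroup 𝓗] [InnerProductSpace ℂ 𝓗]
    [CompleteSpace 𝓗] (A : 𝓗 →ₗ.[ℂ] 𝓗) (hdense : Dense (A.domain : Set 𝓗))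
    (C : 𝓗 →L[ℂ] 𝓗) {M : ℝ} (hM : 0 ≤ M)
    (hb : ∀ x : 𝓗, ∃ hx : C x ∈ A.domain, ‖A ⟨C x, hx⟩‖ ≤ M * ‖x‖)
    (φ : 𝓗) (hφ : φ ∈ A.adjoint.domain) :
    ‖ContinuousLinearMap.adjoint C (A.adjoint ⟨φ, hφ⟩)‖ ≤ M * ‖φ‖ := by
  set ψ := ContinuousLinearMap.adjoint C (A.adjoint ⟨φ, hφ⟩) with hψdef
  obtain ⟨hψ, hbψ⟩ := hb ψ
  have h1 : ⟪ψ, ψ⟫ = ⟪(φ : 𝓗), A ⟨C ψ, hψ⟩⟫ :=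
    (ContinuousLinearMap.adjoint_inner_left C ψ (A.adjoint ⟨φ, hφ⟩)).trans
      (LinearPMap.adjoint_isFormalAdjoint hdense ⟨φ, hφ⟩ ⟨C ψ, hψ⟩)
  have h2 : ‖ψ‖ ^ 2 ≤ M * ‖φ‖ * ‖ψ‖ := by
    have : ‖ψ‖ ^ 2 = ‖⟪ψ, ψ⟫‖ := by
      rw [@inner_self_eq_norm_sq_to_K ℂ]
      simp
    rw [this, h1]
    calc ‖⟪(φ : 𝓗), A ⟨C ψ, hψ⟩⟫‖ ≤ ‖φ‖ * ‖A ⟨C ψ, hψ⟩‖ := norm_inner_le_norm _ _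
      _ ≤ ‖φ‖ * (M * ‖ψ‖) := by
          exact mul_le_mul_of_nonneg_left hbψ (norm_nonneg _)
      _ = M * ‖φ‖ * ‖ψ‖ := by ring
  rcases eq_or_lt_of_le (norm_nonneg ψ) with h | h
  · rw [← h]; positivity
  · nlinarith

private lemma stmt4_bwd {𝓗 : Type*} [NormedAddCommGroup 𝓗] [InnerProductSpace ℂ 𝓗]
    [CompleteSpace 𝓗] (A : 𝓗 →ₗ.[ℂ] 𝓗) (hdense : Dense (A.domain : Set 𝓗))
    (hclosed : IsClosed (A.graph : Set (𝓗 × 𝓗))) (C : 𝓗 →L[ℂ] 𝓗) {M : ℝ} (hM : 0 ≤ M)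
    (hb : ∀ φ : 𝓗, ∀ hφ : φ ∈ A.adjoint.domain,
        ‖ContinuousLinearMap.adjoint C (A.adjoint ⟨φ, hφ⟩)‖ ≤ M * ‖φ‖) (x : 𝓗) :
    ∃ hx : C x ∈ A.domain, ‖A ⟨C x, hx⟩‖ ≤ M * ‖x‖ := by
  classical
  -- the bounded functional v ↦ ⟪x, C* A* v⟫ on D(A*)
  set f₀ : A.adjoint.domain →ₗ[ℂ] ℂ :=
    (((innerSL ℂ x).comp (ContinuousLinearMap.adjoint C)).toLinearMap).comp
      A.adjoint.toFun with hf₀def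
  have hf₀ : ∀ v : A.adjoint.domain, ‖f₀ v‖ ≤ M * ‖x‖ * ‖v‖ := by
    intro v
    have : f₀ v = ⟪x, ContinuousLinearMap.adjoint C (A.adjoint v)⟫ := rfl
    rw [this]
    calc ‖⟪x, ContinuousLinearMap.adjoint C (A.adjoint v)⟫‖
        ≤ ‖x‖ * ‖ContinuousLinearMap.adjoint C (A.adjoint v)‖ := norm_inner_le_norm _ _
      _ ≤ ‖x‖ * (M * ‖v‖) := mul_le_mul_of_nonneg_left (hb v v.2) (norm_nonneg _)
      _ = M * ‖x‖ * ‖v‖ := by ring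
  set f : A.adjoint.domain →L[ℂ] ℂ := f₀.mkContinuous (M * ‖x‖) hf₀ with hfdef
  obtain ⟨g, hgf, hgnorm⟩ := exists_extension_norm_eq A.adjoint.domain f
  set y := (InnerProductSpace.toDual ℂ 𝓗).symm g with hydef
  have hy_norm : ‖y‖ ≤ M * ‖x‖ := by
    rw [hydef, LinearIsometryEquiv.norm_map, hgnorm]
    exact f₀.mkContinuous_norm_le (by positivity) hf₀
  have hy : ∀ v : A.adjoint.domain, ⟪y, (v : 𝓗)⟫ = ⟪C x, A.adjoint v⟫ := by
    intro v
    rw [hydef, InnerProductSpace.toDual_symm_apply, hgf v]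
    show f₀ v = _
    have : f₀ v = ⟪x, ContinuousLinearMap.adjoint C (A.adjoint v)⟫ := rfl
    rw [this, ContinuousLinearMap.adjoint_inner_right]
  -- move to the L² product space
  set G : Submodule ℂ (WithLp 2 (𝓗 × 𝓗)) :=
    A.graph.comap (WithLp.linearEquiv 2 ℂ (𝓗 × 𝓗)).toLinearMap with hGdef
  have hGclosed : IsClosed (G : Set (WithLp 2 (𝓗 × 𝓗))) := by
    have : (G : Set (WithLp 2 (𝓗 × 𝓗))) =
        (WithLp.prodContinuousLinearEquiv 2 ℂ 𝓗 𝓗) ⁻¹' (A.graph : Set (𝓗 × 𝓗)) := rfl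
    rw [this]
    exact hclosed.preimage (WithLp.prodContinuousLinearEquiv 2 ℂ 𝓗 𝓗).continuous
  haveI : CompleteSpace G := hGclosed.completeSpace_coe
  set z : WithLp 2 (𝓗 × 𝓗) := (WithLp.equiv 2 (𝓗 × 𝓗)).symm (C x, y) with hzdef
  have hzmem : z ∈ Gᗮᗮ := by
    rw [Submodule.mem_orthogonal]
    intro w hw
    rw [Submodule.mem_orthogonal'] at hw
    have hw' : ∀ a : A.domain, ⟪w.fst, (a : 𝓗)⟫ + ⟪w.snd, A a⟫ = 0 := by
      intro a
      have hmem : (WithLp.equiv 2 (𝓗 × 𝓗)).symm ((a : 𝓗), A a) ∈ G := by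
        show ((a : 𝓗), A a) ∈ A.graph
        exact A.mem_graph a
      simpa [WithLp.prod_inner_apply] using hw _ hmem
    have hv : w.snd ∈ A.adjoint.domain := by
      apply LinearPMap.mem_adjoint_domain_of_exists
      exact ⟨-w.fst, fun a => by
        have h := hw' a
        rw [inner_neg_left]
        linear_combination -h⟩
    have hAv : A.adjoint ⟨w.snd, hv⟩ = -w.fst := by
      apply LinearPMap.adjoint_apply_eq hdense
      intro a
      have h := hw' a
      rw [inner_neg_left]
      linear_combination -h
    have h2 : ⟪w.snd, y⟫ = -⟪w.fst, C x⟫ := by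
      have h3 : (⟪y, w.snd⟫ : ℂ) = ⟪C x, A.adjoint ⟨w.snd, hv⟩⟫ := hy ⟨w.snd, hv⟩
      calc (⟪w.snd, y⟫ : ℂ) = (starRingEnd ℂ) ⟪y, w.snd⟫ := (inner_conj_symm _ _).symm
        _ = (starRingEnd ℂ) ⟪C x, A.adjoint ⟨w.snd, hv⟩⟫ := by rw [h3]
        _ = ⟪A.adjoint ⟨w.snd, hv⟩, C x⟫ := inner_conj_symm _ _
        _ = -⟪w.fst, C x⟫ := by rw [hAv, inner_neg_left]
    show ⟪w, z⟫ = 0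
    have : ⟪w, z⟫ = ⟪w.fst, C x⟫ + ⟪w.snd, y⟫ := by
      rw [WithLp.prod_inner_apply]; rfl
    rw [this, h2]; ring
  rw [Submodule.orthogonal_orthogonal] at hzmem
  have hgraph : (C x, y) ∈ A.graph := hzmem
  rw [LinearPMap.mem_graph_iff] at hgraph
  obtain ⟨a, ha1, ha2⟩ := hgraph
  have hx : C x ∈ A.domain := Set.mem_of_eq_of_mem (show C x = (a : 𝓗) from ha1.symm) a.2
  refine ⟨hx, ?_⟩
  have : (⟨C x, hx⟩ : A.domain) = a := Subtype.ext (show C x = (a : 𝓗) from ha1.symm)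
  rw [this, ha2]
  exact hy_norm

theorem stmt4 {𝓗 : Type*} [NormedAddCommGroup 𝓗] [InnerProductSpace ℂ 𝓗] [CompleteSpace 𝓗]
    (A : 𝓗 →ₗ.[ℂ] 𝓗) (hdense : Dense (A.domain : Set 𝓗))
    (hclosed : IsClosed (A.graph : Set (𝓗 × 𝓗)))
    (C : 𝓗 →L[ℂ] 𝓗) :
    ((∃ M : ℝ, 0 ≤ M ∧ ∀ x : 𝓗, ∃ hx : C x ∈ A.domain, ‖A ⟨C x, hx⟩‖ ≤ M * ‖x‖) ↔
      (∃ M : ℝ, 0 ≤ M ∧ ∀ φ : 𝓗, ∀ hφ : φ ∈ A.adjoint.domain,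
        ‖ContinuousLinearMap.adjoint C (A.adjoint ⟨φ, hφ⟩)‖ ≤ M * ‖φ‖)) ∧
    (∀ M : ℝ, 0 ≤ M →
      ((∀ x : 𝓗, ∃ hx : C x ∈ A.domain, ‖A ⟨C x, hx⟩‖ ≤ M * ‖x‖) ↔
        (∀ φ : 𝓗, ∀ hφ : φ ∈ A.adjoint.domain,
          ‖ContinuousLinearMap.adjoint C (A.adjoint ⟨φ, hφ⟩)‖ ≤ M * ‖φ‖))) := by
  have main : ∀ M : ℝ, 0 ≤ M →
      ((∀ x : 𝓗, ∃ hx : C x ∈ A.domain, ‖A ⟨C x, hx⟩‖ ≤ M * ‖x‖) ↔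
        (∀ φ : 𝓗, ∀ hφ : φ ∈ A.adjoint.domain,
          ‖ContinuousLinearMap.adjoint C (A.adjoint ⟨φ, hφ⟩)‖ ≤ M * ‖φ‖)) := by
    intro M hM
    exact ⟨fun h => stmt4_fwd A hdense C hM h,
      fun h => stmt4_bwd A hdense hclosed C hM h⟩
  exact ⟨⟨fun ⟨M, hM, h⟩ => ⟨M, hM, (main M hM).mp h⟩,
    fun ⟨M, hM, h⟩ => ⟨M, hM, (main M hM).mpr h⟩⟩, main⟩
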